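/- Let S be an aperiodic Borel automorphism of a standard Borel space X. Then there exists a decreasing sequence (B_n)_{n≥1} of Borel sets such that each B_n is a complete section for S whose complement is also a complete section, the sets B_n, S(B_n), ..., S^{n-1}(B_n) are pairwise disjoint for each n, and ⋂_{n≥1} B_n = ∅ (a vanishing sequence of markers). -/

import Mathlib

set_option linter.unusedSectionVars false

open MeasureTheory Set

namespace Stmt6Aux

variable {X : Type*} [MeasurableSpace X] (S : Equiv.Perm X) (E : ℕ → Set X)

lemma zpow_zpow_apply (a b : ℤ) (x : X) : (S ^ a) ((S ^ b) x) = (S ^ (a + b)) x := by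
  rw [← Equiv.Perm.mul_apply, ← zpow_add]

lemma zpow_neg_apply (a : ℤ) (x : X) : (S ^ (-a)) ((S ^ a) x) = x := by
  rw [zpow_zpow_apply, neg_add_cancel, zpow_zero, Equiv.Perm.one_apply]

lemma meas_zpow (hS : Measurable S) (hS' : Measurable S.symm) (i : ℤ) :
    Measurable ⇑(S ^ i) := by
  induction i using Int.induction_on with
  | zero => simpa using measurable_id
  | succ n ih =>
      have h : ⇑(S ^ ((n : ℤ) + 1)) = fun x => (S ^ (n : ℤ)) (S x) := by
        ext x; rw [zpow_add_one, Equiv.Perm.mul_apply]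
      rw [h]; exact ih.comp hS
  | pred n ih =>
      have h : ⇑(S ^ (-(n : ℤ) - 1)) = fun x => (S ^ (-(n : ℤ))) (S.symm x) := by
        ext x; rw [zpow_sub_one, Equiv.Perm.mul_apply]; rfl
      rw [h]; exact ih.comp hS'

/-- The separation property we need from `E`. -/
def Sep : Prop := ∀ x y : X, x ≠ y → ∃ k, ¬ (x ∈ E k ↔ y ∈ E k)

/-- least separating index for `x` and `(S ^ i) x`. -/
noncomputable def kk (i : ℤ) (x : X) : ℕ :=
  sInf {k | ¬ (x ∈ E k ↔ (S ^ i) x ∈ E k)}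

lemma kk_spec (hE : Sep E)
    (hap : ∀ (x : X) (n : ℤ), n ≠ 0 → (S ^ n) x ≠ x) {i : ℤ} (hi : i ≠ 0) (x : X) :
    ¬ (x ∈ E (kk S E i x) ↔ (S ^ i) x ∈ E (kk S E i x)) :=
  Nat.sInf_mem (hE x ((S ^ i) x) (hap x i hi).symm)

lemma kk_symm (i : ℤ) (x : X) : kk S E (-i) ((S ^ i) x) = kk S E i x := by
  unfold kk
  congr 1
  ext k
  rw [mem_setOf_eq, mem_setOf_eq, zpow_neg_apply]
  exact ⟨fun h hiff => h hiff.symm, fun h hiff => h hiff.symm⟩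

open Classical in
noncomputable def entry (i : ℤ) (x : X) : ℕ :=
  Nat.pair (kk S E i x) (if x ∈ E (kk S E i x) then 1 else 0)

def offs (N : ℕ) : List ℤ :=
  ((List.range (2 * N + 1)).map (fun j : ℕ => (j : ℤ) - N)).filter (fun i => decide (i ≠ 0))

lemma mem_offs {N : ℕ} {i : ℤ} : i ∈ offs N ↔ i ≠ 0 ∧ -(N : ℤ) ≤ i ∧ i ≤ N := by
  constructor
  · intro h
    obtain ⟨h1, h2⟩ := List.mem_filter.mp h
    obtain ⟨j, hj, hji⟩ := List.mem_map.mp h1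
    have hjr := List.mem_range.mp hj
    have h0 : i ≠ 0 := by simpa using h2
    refine ⟨h0, ?_, ?_⟩ <;> omega
  · rintro ⟨h0, h1, h2⟩
    exact List.mem_filter.mpr ⟨List.mem_map.mpr ⟨(i + N).toNat,
      List.mem_range.mpr (by omega), by omega⟩, by simpa using h0⟩

lemma neg_mem_offs {N : ℕ} {i : ℤ} (h : i ∈ offs N) : -i ∈ offs N := by
  rw [mem_offs] at h ⊢; omega

noncomputable def chi (N : ℕ) (x : X) : ℕ :=
  ((offs N).map (fun i => entry S E i x)).foldr Nat.pair 0

lemma foldr_pair_inj : ∀ l₁ l₂ : List ℕ, l₁.length = l₂.length →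
    l₁.foldr Nat.pair 0 = l₂.foldr Nat.pair 0 → l₁ = l₂
  | [], [], _, _ => rfl
  | [], _ :: _, hl, _ => by simp at hl
  | _ :: _, [], hl, _ => by simp at hl
  | a :: l₁, b :: l₂, hl, h => by
    simp only [List.foldr_cons] at h
    obtain ⟨h1, h2⟩ := Nat.pair_eq_pair.mp h
    rw [h1, foldr_pair_inj l₁ l₂ (by simpa using hl) h2]

lemma chi_eq_entries {N : ℕ} {x y : X} (h : chi S E N x = chi S E N y) :
    ∀ i ∈ offs N, entry S E i x = entry S E i y := by
  have h2 := foldr_pair_inj _ _ (by simp) h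
  exact fun i hi => List.map_eq_map_iff.mp h2 i hi

lemma chi_ne (hE : Sep E)
    (hap : ∀ (x : X) (n : ℤ), n ≠ 0 → (S ^ n) x ≠ x)
    {N : ℕ} {c : ℤ} (hc : c ∈ offs N) (x : X) :
    chi S E N x ≠ chi S E N ((S ^ c) x) := by
  intro h
  have hc0 : c ≠ 0 := (mem_offs.mp hc).1
  have he := chi_eq_entries S E h (-c) (neg_mem_offs hc)
  have hky : kk S E (-c) ((S ^ c) x) = kk S E c x := kk_symm S E c x
  unfold entry at he
  rw [hky] at he
  obtain ⟨hk, hb⟩ := Nat.pair_eq_pair.mp he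
  rw [hk] at hb
  have hiff : x ∈ E (kk S E c x) ↔ (S ^ c) x ∈ E (kk S E c x) := by
    by_cases h1 : x ∈ E (kk S E c x) <;> by_cases h2 : (S ^ c) x ∈ E (kk S E c x) <;>
      simp [h1, h2] at hb ⊢
  exact kk_spec S E hE hap hc0 x hiff

variable (P : Set X) (N : ℕ)

noncomputable def gg : ℕ → Set X
  | 0 => ∅
  | m + 1 => gg m ∪ {x | x ∈ P ∧ chi S E N x = m ∧ ∀ i ∈ offs N, (S ^ i) x ∉ gg m}

noncomputable def marker : Set X := ⋃ m, gg S E P N m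

lemma gg_subset : ∀ m, gg S E P N m ⊆ P := by
  intro m
  induction m with
  | zero => simp [gg]
  | succ m ih =>
      intro x hx
      rcases hx with hx | hx
      · exact ih hx
      · exact hx.1

lemma gg_mono : Monotone (gg S E P N) :=
  monotone_nat_of_le_succ fun _ => subset_union_left

lemma marker_subset : marker S E P N ⊆ P := by
  intro x hx
  obtain ⟨m, hm⟩ := mem_iUnion.mp hx
  exact gg_subset S E P N m hm

lemma marker_elim {x : X} (hx : x ∈ marker S E P N) :
    x ∈ P ∧ x ∈ gg S E P N (chi S E N x + 1) ∧
      ∀ i ∈ offs N, (S ^ i) x ∉ gg S E P N (chi S E N x) := by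
  obtain ⟨m, hm⟩ := mem_iUnion.mp hx
  induction m with
  | zero => simp [gg] at hm
  | succ m ih =>
      rcases hm with hm | hm
      · exact ih hm
      · obtain ⟨hP, hchi, hno⟩ := hm
        subst hchi
        exact ⟨hP, Or.inr ⟨hP, rfl, hno⟩, hno⟩

lemma marker_indep (hE : Sep E)
    (hap : ∀ (x : X) (n : ℤ), n ≠ 0 → (S ^ n) x ≠ x)
    {d : ℤ} (hd : d ∈ offs N) {x : X}
    (hx : x ∈ marker S E P N) (hy : (S ^ d) x ∈ marker S E P N) : False := by
  obtain ⟨_, hx2, hx3⟩ := marker_elim S E P N hx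
  obtain ⟨_, hy2, hy3⟩ := marker_elim S E P N hy
  have hne : chi S E N x ≠ chi S E N ((S ^ d) x) := chi_ne S E hE hap hd x
  rcases lt_or_gt_of_ne hne with h | h
  · have hxin : x ∈ gg S E P N (chi S E N ((S ^ d) x)) := gg_mono S E P N h hx2
    have h2 := hy3 (-d) (neg_mem_offs hd)
    rw [zpow_neg_apply] at h2
    exact h2 hxin
  · have hyin : (S ^ d) x ∈ gg S E P N (chi S E N x) := gg_mono S E P N h hy2
    exact hx3 d hd hyin

lemma marker_max {x : X} (hxP : x ∈ P) (hx : x ∉ marker S E P N) :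
    ∃ d ∈ offs N, (S ^ d) x ∈ marker S E P N := by
  have h1 : x ∉ gg S E P N (chi S E N x + 1) := fun h => hx (mem_iUnion.mpr ⟨_, h⟩)
  simp only [gg, Set.mem_union, Set.mem_setOf_eq, not_or, not_and, not_forall] at h1
  obtain ⟨d, hd, hdm⟩ := h1.2 hxP trivial
  exact ⟨d, hd, mem_iUnion.mpr ⟨_, not_not.mp hdm⟩⟩

end Stmt6Aux
namespace Stmt6Aux

variable {X : Type*} [MeasurableSpace X] (S : Equiv.Perm X) (E : ℕ → Set X)

lemma sepset_meas (hS : Measurable S) (hS' : Measurable S.symm)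
    (hEm : ∀ k, MeasurableSet (E k)) (i : ℤ) (k : ℕ) :
    MeasurableSet {x : X | ¬ (x ∈ E k ↔ (S ^ i) x ∈ E k)} := by
  have h2 : MeasurableSet (⇑(S ^ i) ⁻¹' E k) := meas_zpow S hS hS' i (hEm k)
  have heq : {x : X | ¬ (x ∈ E k ↔ (S ^ i) x ∈ E k)}
      = (E k \ ⇑(S ^ i) ⁻¹' E k) ∪ (⇑(S ^ i) ⁻¹' E k \ E k) := by
    ext x
    simp only [mem_setOf_eq, mem_union, mem_diff, mem_preimage]
    tauto
  rw [heq]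
  exact ((hEm k).diff h2).union (h2.diff (hEm k))

lemma meas_kk (hS : Measurable S) (hS' : Measurable S.symm)
    (hEm : ∀ k, MeasurableSet (E k)) (hE : Sep E)
    (hap : ∀ (x : X) (n : ℤ), n ≠ 0 → (S ^ n) x ≠ x) {i : ℤ} (hi : i ≠ 0) :
    Measurable (kk S E i) := by
  apply measurable_to_countable'
  intro m
  have hfib : kk S E i ⁻¹' {m} =
      {x : X | ¬ (x ∈ E m ↔ (S ^ i) x ∈ E m)} ∩
        ⋂ (k : ℕ) (_ : k < m), {x : X | ¬ (x ∈ E k ↔ (S ^ i) x ∈ E k)}ᶜ := by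
    ext x
    simp only [mem_preimage, mem_singleton_iff, mem_inter_iff, mem_iInter,
      mem_compl_iff, mem_setOf_eq, not_not]
    constructor
    · rintro rfl
      refine ⟨kk_spec S E hE hap hi x, fun k hk => ?_⟩
      by_contra hc
      exact Nat.notMem_of_lt_sInf hk hc
    · rintro ⟨hm, hlt⟩
      have hne : Set.Nonempty {k | ¬ (x ∈ E k ↔ (S ^ i) x ∈ E k)} := ⟨m, hm⟩
      have h3 : ¬ (x ∈ E (kk S E i x) ↔ (S ^ i) x ∈ E (kk S E i x)) := Nat.sInf_mem hne
      have h1 : kk S E i x ≤ m := Nat.sInf_le hm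
      have h2 : ¬ kk S E i x < m := fun hlt' => h3 (hlt _ hlt')
      omega
  rw [hfib]
  exact (sepset_meas S E hS hS' hEm i m).inter
    (MeasurableSet.iInter fun k => MeasurableSet.iInter fun _ =>
      (sepset_meas S E hS hS' hEm i k).compl)

open Classical in
lemma meas_entry (hS : Measurable S) (hS' : Measurable S.symm)
    (hEm : ∀ k, MeasurableSet (E k)) (hE : Sep E)
    (hap : ∀ (x : X) (n : ℤ), n ≠ 0 → (S ^ n) x ≠ x) {i : ℤ} (hi : i ≠ 0) :
    Measurable (entry S E i) := by
  have hA : MeasurableSet {x | x ∈ E (kk S E i x)} := by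
    have heq : {x | x ∈ E (kk S E i x)} = ⋃ m, (kk S E i ⁻¹' {m} ∩ E m) := by
      ext x
      simp only [mem_setOf_eq, mem_iUnion, mem_inter_iff, mem_preimage, mem_singleton_iff]
      exact ⟨fun h => ⟨kk S E i x, rfl, h⟩, fun ⟨m, hm, hx⟩ => hm ▸ hx⟩
    rw [heq]
    exact MeasurableSet.iUnion fun m =>
      ((meas_kk S E hS hS' hEm hE hap hi) (measurableSet_singleton m)).inter (hEm m)
  have hbit : Measurable (fun x => (if x ∈ E (kk S E i x) then 1 else 0 : ℕ)) :=
    Measurable.ite hA measurable_const measurable_const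
  exact (measurable_of_countable (fun p : ℕ × ℕ => Nat.pair p.1 p.2)).comp
    ((meas_kk S E hS hS' hEm hE hap hi).prodMk hbit)

lemma meas_fold (hS : Measurable S) (hS' : Measurable S.symm)
    (hEm : ∀ k, MeasurableSet (E k)) (hE : Sep E)
    (hap : ∀ (x : X) (n : ℤ), n ≠ 0 → (S ^ n) x ≠ x) :
    ∀ l : List ℤ, (∀ i ∈ l, i ≠ 0) →
    Measurable (fun x => (l.map (fun i => entry S E i x)).foldr Nat.pair 0) := by
  intro l
  induction l with
  | nil => intro _; simpa using measurable_const
  | cons a l ih =>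
      intro hl
      simp only [List.map_cons, List.foldr_cons]
      exact (measurable_of_countable (fun p : ℕ × ℕ => Nat.pair p.1 p.2)).comp
        ((meas_entry S E hS hS' hEm hE hap (hl a List.mem_cons_self)).prodMk
          (ih fun i hi => hl i (List.mem_cons_of_mem a hi)))

lemma meas_chi (hS : Measurable S) (hS' : Measurable S.symm)
    (hEm : ∀ k, MeasurableSet (E k)) (hE : Sep E)
    (hap : ∀ (x : X) (n : ℤ), n ≠ 0 → (S ^ n) x ≠ x) (N : ℕ) :
    Measurable (chi S E N) :=
  meas_fold S E hS hS' hEm hE hap (offs N) (fun i hi => (mem_offs.mp hi).1)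

lemma meas_gg (hS : Measurable S) (hS' : Measurable S.symm)
    (hEm : ∀ k, MeasurableSet (E k)) (hE : Sep E)
    (hap : ∀ (x : X) (n : ℤ), n ≠ 0 → (S ^ n) x ≠ x)
    {P : Set X} (hP : MeasurableSet P) (N : ℕ) :
    ∀ m, MeasurableSet (gg S E P N m) := by
  intro m
  induction m with
  | zero => simp only [gg]; exact MeasurableSet.empty
  | succ m ih =>
      have heq : {x | x ∈ P ∧ chi S E N x = m ∧ ∀ i ∈ offs N, (S ^ i) x ∉ gg S E P N m}
          = (P ∩ chi S E N ⁻¹' {m}) ∩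
            ⋂ (i : ℤ) (_ : i ∈ offs N), ⇑(S ^ i) ⁻¹' (gg S E P N m)ᶜ := by
        ext x
        simp only [mem_setOf_eq, mem_inter_iff, mem_preimage, mem_singleton_iff,
          mem_iInter, mem_compl_iff]
        tauto
      show MeasurableSet (_ ∪ _)
      refine ih.union ?_
      rw [heq]
      exact ((hP.inter ((meas_chi S E hS hS' hEm hE hap N) (measurableSet_singleton m))).inter
        (MeasurableSet.iInter fun i => MeasurableSet.iInter fun _ =>
          (meas_zpow S hS hS' i) ih.compl))

lemma meas_marker (hS : Measurable S) (hS' : Measurable S.symm)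
    (hEm : ∀ k, MeasurableSet (E k)) (hE : Sep E)
    (hap : ∀ (x : X) (n : ℤ), n ≠ 0 → (S ^ n) x ≠ x)
    {P : Set X} (hP : MeasurableSet P) (N : ℕ) :
    MeasurableSet (marker S E P N) :=
  MeasurableSet.iUnion (meas_gg S E hS hS' hEm hE hap hP N)

noncomputable def dd : ℕ → Set X
  | 0 => univ
  | n + 1 => marker S E (dd n) (n + 1)

lemma dd_succ_subset (n : ℕ) : dd S E (n + 1) ⊆ dd S E n :=
  marker_subset S E (dd S E n) (n + 1)

lemma dd_anti : Antitone (dd S E) :=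
  antitone_nat_of_succ_le (dd_succ_subset S E)

lemma dd_meas (hS : Measurable S) (hS' : Measurable S.symm) (hEm : ∀ k, MeasurableSet (E k))
    (hE : Sep E) (hap : ∀ (x : X) (n : ℤ), n ≠ 0 → (S ^ n) x ≠ x) :
    ∀ n, MeasurableSet (dd S E n) := by
  intro n
  induction n with
  | zero => exact MeasurableSet.univ
  | succ n ih => exact meas_marker S E hS hS' hEm hE hap ih (n + 1)

lemma dd_indep (hE : Sep E) (hap : ∀ (x : X) (n : ℤ), n ≠ 0 → (S ^ n) x ≠ x)
    {n : ℕ} {x : X} {d : ℤ} (hd : d ≠ 0) (h1 : -((n : ℤ) + 1) ≤ d) (h2 : d ≤ (n : ℤ) + 1)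
    (hx : x ∈ dd S E (n + 1)) (hy : (S ^ d) x ∈ dd S E (n + 1)) : False := by
  refine marker_indep S E (dd S E n) (n + 1) hE hap (d := d) ?_ hx hy
  rw [mem_offs]
  push_cast
  exact ⟨hd, h1, h2⟩

lemma dd_reach_ge (hE : Sep E) (hap : ∀ (x : X) (n : ℤ), n ≠ 0 → (S ^ n) x ≠ x) :
    ∀ (n : ℕ) (x : X) (m : ℤ), ∃ i : ℤ, m ≤ i ∧ (S ^ i) x ∈ dd S E n := by
  intro n
  induction n with
  | zero => exact fun x m => ⟨m, le_refl m, mem_univ _⟩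
  | succ n ih =>
      intro x m
      obtain ⟨i, hi1, hi2⟩ := ih x (m + (n + 1))
      by_cases hmem : (S ^ i) x ∈ dd S E (n + 1)
      · exact ⟨i, by omega, hmem⟩
      · obtain ⟨d, hd, hdm⟩ := marker_max S E (dd S E n) (n + 1) hi2 hmem
        rw [zpow_zpow_apply] at hdm
        obtain ⟨_, hd1, hd2⟩ := mem_offs.mp hd
        refine ⟨d + i, ?_, hdm⟩
        push_cast at hd1 hd2
        omega

end Stmt6Aux

namespace Stmt6Aux

variable {X : Type*} [MeasurableSpace X] (S : Equiv.Perm X) (E : ℕ → Set X)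

lemma dd_reach_le (hE : Sep E) (hap : ∀ (x : X) (n : ℤ), n ≠ 0 → (S ^ n) x ≠ x) :
    ∀ (n : ℕ) (x : X) (m : ℤ), ∃ i : ℤ, i ≤ m ∧ (S ^ i) x ∈ dd S E n := by
  intro n
  induction n with
  | zero => exact fun x m => ⟨m, le_refl m, mem_univ _⟩
  | succ n ih =>
      intro x m
      obtain ⟨i, hi1, hi2⟩ := ih x (m - (n + 1))
      by_cases hmem : (S ^ i) x ∈ dd S E (n + 1)
      · exact ⟨i, by omega, hmem⟩
      · obtain ⟨d, hd, hdm⟩ := marker_max S E (dd S E n) (n + 1) hi2 hmem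
        rw [zpow_zpow_apply] at hdm
        obtain ⟨_, hd1, hd2⟩ := mem_offs.mp hd
        refine ⟨d + i, ?_, hdm⟩
        push_cast at hd1 hd2
        omega

/-- The intersection of all the `dd` levels: meets every orbit at most once. -/
noncomputable def cset : Set X := ⋂ n, dd S E n

lemma cset_unique (hE : Sep E) (hap : ∀ (x : X) (n : ℤ), n ≠ 0 → (S ^ n) x ≠ x)
    {x : X} {a b : ℤ} (ha : (S ^ a) x ∈ cset S E) (hb : (S ^ b) x ∈ cset S E) :
    a = b := by
  by_contra hab
  set d : ℤ := a - b with hd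
  have hd0 : d ≠ 0 := by omega
  set n : ℕ := d.natAbs with hn
  have hb' : (S ^ b) x ∈ dd S E (n + 1) := mem_iInter.mp hb (n + 1)
  have ha' : (S ^ d) ((S ^ b) x) ∈ dd S E (n + 1) := by
    rw [zpow_zpow_apply]
    have : d + b = a := by omega
    rw [this]
    exact mem_iInter.mp ha (n + 1)
  exact dd_indep S E hE hap hd0 (by omega) (by omega) hb' ha'

end Stmt6Aux

open Stmt6Aux in
/-- vanishing sequence of markers for an aperiodic Borel automorphism. -/
theorem stmt6 {X : Type*} [MeasurableSpace X] [StandardBorelSpace X]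
    (S : Equiv.Perm X) (hS : Measurable S) (hS' : Measurable S.symm)
    (haper : ∀ (x : X) (n : ℤ), n ≠ 0 → (S ^ n) x ≠ x) :
    ∃ B : ℕ → Set X,
      (∀ n, MeasurableSet (B n)) ∧ Antitone B ∧
      (∀ (n : ℕ) (x : X), ∃ i : ℤ, (S ^ i) x ∈ B n) ∧
      (∀ (n : ℕ) (x : X), ∃ i : ℤ, (S ^ i) x ∉ B n) ∧
      (∀ (n : ℕ) (i j : ℕ), i < n → j < n → i ≠ j →
        Disjoint ((fun x => (S ^ i) x) '' B n) ((fun x => (S ^ j) x) '' B n)) ∧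
      (⋂ n : ℕ, B n) = ∅ := by
  obtain ⟨f, hf⟩ := MeasureTheory.exists_measurableEmbedding_real X
  obtain ⟨g, hg⟩ := exists_surjective_nat ℚ
  set E : ℕ → Set X := fun k => f ⁻¹' Set.Iio ((g k : ℚ) : ℝ) with hEdef
  have hEm : ∀ k, MeasurableSet (E k) := fun k => hf.measurable measurableSet_Iio
  have hE : Sep E := by
    intro x y hxy
    have hne : f x ≠ f y := fun h => hxy (hf.injective h)
    have key : ∀ u v : X, f u < f v → ∃ k, ¬ (u ∈ E k ↔ v ∈ E k) := by
      intro u v huv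
      obtain ⟨q, hq1, hq2⟩ := exists_rat_btwn huv
      obtain ⟨k, rfl⟩ := hg q
      refine ⟨k, fun hiff => ?_⟩
      simp only [hEdef, mem_preimage, mem_Iio] at hiff
      exact absurd (hiff.mp hq1) (not_lt.2 hq2.le)
    rcases lt_or_gt_of_ne hne with h | h
    · exact key x y h
    · obtain ⟨k, hk⟩ := key y x h
      exact ⟨k, fun hiff => hk hiff.symm⟩
  refine ⟨fun n => dd S E (n + 1) \ cset S E, ?_, ?_, ?_, ?_, ?_, ?_⟩
  · intro n
    exact (dd_meas S E hS hS' hEm hE haper (n + 1)).diff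
      (MeasurableSet.iInter fun m => dd_meas S E hS hS' hEm hE haper m)
  · exact antitone_nat_of_succ_le fun n =>
      diff_subset_diff_left (dd_succ_subset S E (n + 1))
  · -- complete section
    intro n x
    obtain ⟨i, _, hi⟩ := dd_reach_ge S E hE haper (n + 1) x 0
    obtain ⟨j, hj1, hj⟩ := dd_reach_ge S E hE haper (n + 1) x (i + 1)
    by_cases hc : (S ^ i) x ∈ cset S E
    · refine ⟨j, hj, fun hc' => ?_⟩
      have := cset_unique S E hE haper hc' hc
      omega
    · exact ⟨i, hi, hc⟩
  · -- complement is a complete section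
    intro n x
    obtain ⟨i, _, hi⟩ := dd_reach_ge S E hE haper (n + 1) x 0
    refine ⟨i + 1, fun hmem => ?_⟩
    have h1 : (S ^ (1 : ℤ)) ((S ^ i) x) ∈ dd S E (n + 1) := by
      rw [zpow_zpow_apply]
      have : (1 : ℤ) + i = i + 1 := by omega
      rw [this]
      exact hmem.1
    exact dd_indep S E hE haper (by omega) (by omega) (by omega) hi h1
  · -- disjointness of the shifts
    intro n i j hi hj hij
    rw [Set.disjoint_left]
    rintro z ⟨p, hp, hpz⟩ ⟨q, hq, hqz⟩
    have hpz' : (S ^ i) p = z := hpz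
    have hqz' : (S ^ j) q = z := hqz
    have hzq : (S ^ (j : ℤ)) q = (S ^ (i : ℤ)) p := by
      rw [zpow_natCast, zpow_natCast, hpz', hqz']
    have hq' : (S ^ ((i : ℤ) - j)) p = q := by
      have h2 := congrArg (⇑(S ^ (-(j : ℤ)))) hzq
      rw [zpow_zpow_apply, zpow_zpow_apply, neg_add_cancel, zpow_zero,
        Equiv.Perm.one_apply] at h2
      have heq : (i : ℤ) - j = -(j : ℤ) + i := by omega
      rw [heq]
      exact h2.symm
    have hd0 : (i : ℤ) - j ≠ 0 := by omega
    have hqm : (S ^ ((i : ℤ) - j)) p ∈ dd S E (n + 1) := by rw [hq']; exact hq.1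
    exact dd_indep S E hE haper hd0 (by omega) (by omega) hp.1 hqm
  · -- empty intersection
    rw [Set.eq_empty_iff_forall_notMem]
    intro x hx
    have hx0 := mem_iInter.mp hx 0
    have hxc : x ∈ cset S E := by
      rw [cset, mem_iInter]
      intro k
      cases k with
      | zero => exact mem_univ x
      | succ k => exact (mem_iInter.mp hx k).1
    exact hx0.2 hxc
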